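/- Uniqueness of the weak KAM solution for the spherical pendulum: every backward weak KAM solution u: S^n → ℝ for the value c = 1 (i.e. u ≺ L+1 and for every x ∈ S^n there is a C¹ curve γ_x:(−∞,0] → S^n with γ_x(0)=x and u(x) − u(γ_x(−t)) = ∫_{−t}^0 L(γ_x,γ̇_x) ds + t for all t ≥ 0) is of the form u(x) = u(N) + ∫_{x_{n+1}}^1 √((2−2s)/(1−s²)) ds, where N = (0,…,0,1) is the north pole; in other words, backward weak KAM solutions are unique up to an additive constant. -/

import Mathlib

open Set MeasureTheory intervalIntegral Filter RealInnerProductSpace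

noncomputable section

namespace SphericalPendulum

variable (n : ℕ)

/-- The ambient Euclidean space `ℝ^{n+1}`. -/
abbrev Amb := EuclideanSpace ℝ (Fin (n + 1))

/-- The unit sphere `S^n ⊂ ℝ^{n+1}`. -/
abbrev Sph := Metric.sphere (0 : Amb n) 1

/-- The last coordinate `x_{n+1}` of a point of `ℝ^{n+1}`. -/
def lastCoord (x : Amb n) : ℝ := x (Fin.last n)

/-- The spherical-pendulum Lagrangian `L(x,v) = ½‖v‖² − x_{n+1}`. -/
def Lsph (x v : Amb n) : ℝ := ‖v‖ ^ 2 / 2 - lastCoord n x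

/-- Velocity of a curve in the sphere, computed in the ambient space. -/
def sVel (γ : ℝ → Sph n) (s : ℝ) : Amb n := deriv (fun t : ℝ => (γ t : Amb n)) s

/-- Piecewise `C¹` curve `γ : [a,b] → S^n`. -/
def sPiecewiseC1On (γ : ℝ → Sph n) (a b : ℝ) : Prop :=
  ContinuousOn (fun t : ℝ => (γ t : Amb n)) (Icc a b) ∧
    ∃ (k : ℕ) (t : Fin (k + 1) → ℝ), StrictMono t ∧ t 0 = a ∧ t (Fin.last k) = b ∧
      ∀ i : Fin k, ContDiffOn ℝ 1 (fun s : ℝ => (γ s : Amb n))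
        (Icc (t i.castSucc) (t i.succ))

/-- The action `A_L(γ) = ∫_a^b L(γ(s), γ̇(s)) ds` of a curve `γ : [a,b] → S^n`. -/
def sAction (γ : ℝ → Sph n) (a b : ℝ) : ℝ :=
  ∫ s in a..b, Lsph n (γ s : Amb n) (sVel n γ s)

/-- `u ≺ L + c` : `u` is dominated by `L + c`. -/
def sDominated (c : ℝ) (u : Sph n → ℝ) : Prop :=
  ∀ (γ : ℝ → Sph n) (a b : ℝ), a ≤ b → sPiecewiseC1On n γ a b →
    u (γ b) - u (γ a) ≤ sAction n γ a b + c * (b - a)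

/-- The weak KAM solution `u₊(x) = ∫_{x_{n+1}}^1 √((2−2s)/(1−s²)) ds`. -/
def uPlus (x : Sph n) : ℝ :=
  ∫ s in (lastCoord n (x : Amb n))..1, Real.sqrt ((2 - 2 * s) / (1 - s ^ 2))

/-- Backward weak KAM solution for the value `c`, for the spherical pendulum. -/
def sBackwardWeakKAM (c : ℝ) (u : Sph n → ℝ) : Prop :=
  sDominated n c u ∧
    ∀ x : Sph n, ∃ γ : ℝ → Sph n, γ 0 = x ∧
      ContDiffOn ℝ 1 (fun s : ℝ => (γ s : Amb n)) (Iic 0) ∧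
      ∀ t : ℝ, 0 ≤ t → u x - u (γ (-t)) = sAction n γ (-t) 0 + c * t

/-- The north pole `N = (0,…,0,1) ∈ S^n`. -/
def northPole : Sph n :=
  ⟨EuclideanSpace.single (Fin.last n) (1 : ℝ), by simp⟩

section Aux

variable {n}

/-! ### Basic facts -/

lemma abs_lastCoord_le (x : Amb n) (hx : ‖x‖ = 1) : |lastCoord n x| ≤ 1 := by
  have h := abs_real_inner_le_norm x (EuclideanSpace.single (Fin.last n) (1:ℝ))
  rw [EuclideanSpace.inner_single_right] at h
  simpa [lastCoord, hx] using h

lemma lastCoord_le_one (x : Amb n) (hx : ‖x‖ = 1) : lastCoord n x ≤ 1 :=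
  (abs_le.1 (abs_lastCoord_le x hx)).2

lemma neg_one_le_lastCoord (x : Amb n) (hx : ‖x‖ = 1) : -1 ≤ lastCoord n x :=
  (abs_le.1 (abs_lastCoord_le x hx)).1

lemma sph_norm (x : Sph n) : ‖(x : Amb n)‖ = 1 := by
  have := x.2; simpa [Metric.mem_sphere, dist_eq_norm] using this

/-- Key pointwise inequality for tangent vectors. -/
lemma key_ineq (x v : Amb n) (hx : ‖x‖ = 1) (hxv : ⟪x, v⟫ = 0) :
    2 * lastCoord n v ≤ (‖v‖ ^ 2 / 2 + 1 - lastCoord n x) *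
      Real.sqrt (2 + 2 * lastCoord n x) := by
  set c := lastCoord n x with hc
  set e : Amb n := EuclideanSpace.single (Fin.last n) (1:ℝ) with he
  have hc1 : c ≤ 1 := lastCoord_le_one x hx
  have hcm1 : -1 ≤ c := neg_one_le_lastCoord x hx
  have hex : ⟪e, x⟫ = c := by
    rw [real_inner_comm, EuclideanSpace.inner_single_right]; simp [hc, lastCoord]
  have hve : ⟪v, e⟫ = lastCoord n v := by
    rw [EuclideanSpace.inner_single_right]; simp [lastCoord]
  have h1 : lastCoord n v = ⟪v, e - c • x⟫ := by
    rw [inner_sub_right, real_inner_smul_right, hve, real_inner_comm x v, hxv]; ring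
  have h2 : ‖e - c • x‖ ^ 2 = 1 - c ^ 2 := by
    rw [norm_sub_sq_real, real_inner_smul_right, hex, norm_smul, he]
    rw [EuclideanSpace.norm_single, hx]
    simp [mul_pow, sq_abs]
    ring
  have h3 : |lastCoord n v| ≤ ‖v‖ * Real.sqrt (1 - c ^ 2) := by
    rw [h1]
    calc |⟪v, e - c • x⟫| ≤ ‖v‖ * ‖e - c • x‖ := abs_real_inner_le_norm _ _
    _ = ‖v‖ * Real.sqrt (1 - c ^ 2) := by
        rw [← h2, Real.sqrt_sq (norm_nonneg _)]
  have hsplit : 2 * Real.sqrt (1 - c ^ 2) = Real.sqrt (2 - 2*c) * Real.sqrt (2 + 2*c) := by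
    rw [← Real.sqrt_mul (by linarith)]
    rw [show (2 - 2*c) * (2 + 2*c) = 4 * (1 - c^2) by ring, Real.sqrt_mul (by norm_num)]
    rw [show (4:ℝ) = 2^2 by norm_num, Real.sqrt_sq (by norm_num)]
  have hs2 : Real.sqrt (2 - 2*c) ^ 2 = 2 - 2*c := Real.sq_sqrt (by linarith)
  have hAM : ‖v‖ * Real.sqrt (2 - 2*c) ≤ ‖v‖^2/2 + 1 - c := by
    have := two_mul_le_add_sq ‖v‖ (Real.sqrt (2 - 2*c))
    rw [hs2] at this; linarith
  have hnn : (0:ℝ) ≤ Real.sqrt (2 + 2*c) := Real.sqrt_nonneg _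
  calc 2 * lastCoord n v ≤ 2 * (‖v‖ * Real.sqrt (1 - c ^ 2)) := by
        have := le_abs_self (lastCoord n v); nlinarith [abs_nonneg (lastCoord n v)]
  _ = (‖v‖ * Real.sqrt (2 - 2*c)) * Real.sqrt (2 + 2*c) := by
        rw [mul_comm (2:ℝ), mul_assoc, show √(1 - c ^ 2) * 2 = 2 * √(1 - c ^ 2) from mul_comm _ _, hsplit]; ring
  _ ≤ (‖v‖^2/2 + 1 - c) * Real.sqrt (2 + 2*c) := by
        apply mul_le_mul_of_nonneg_right hAM hnn

/-- A `C¹` curve on a closed interval is a (one-piece) piecewise-`C¹` curve. -/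
lemma single_piece (γ : ℝ → Sph n) (a b : ℝ) (hab : a ≤ b)
    (h : ContDiffOn ℝ 1 (fun s : ℝ => (γ s : Amb n)) (Icc a b)) :
    sPiecewiseC1On n γ a b := by
  refine ⟨h.continuousOn, ?_⟩
  rcases eq_or_lt_of_le hab with rfl | hlt
  · refine ⟨0, fun _ => a, ?_, rfl, rfl, fun i => i.elim0⟩
    intro i j hij
    exact absurd (Fin.lt_iff_val_lt_val.mp hij) (by omega)
  · refine ⟨1, ![a, b], ?_, rfl, rfl, ?_⟩
    · intro i j hij
      fin_cases i <;> fin_cases j <;> simp_all <;> omega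
    · intro i
      fin_cases i
      simpa using h

/-- Orthogonality of position and velocity on the sphere. -/
lemma inner_eq_zero_of_hasDerivAt {c : ℝ → Amb n} {v : Amb n} {s : ℝ}
    (hd : HasDerivAt c v s) (h1 : ∀ᶠ t in nhds s, ‖c t‖ = 1) :
    ⟪c s, v⟫ = 0 := by
  have hin : HasDerivAt (fun t => ⟪c t, c t⟫) (⟪c s, v⟫ + ⟪v, c s⟫) s :=
    HasDerivAt.inner ℝ hd hd
  have hev : (fun t => ⟪c t, c t⟫) =ᶠ[nhds s] (fun _ => (1:ℝ)) := by
    filter_upwards [h1] with t ht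
    rw [real_inner_self_eq_norm_sq, ht]; norm_num
  have h0 : HasDerivAt (fun _ : ℝ => (1:ℝ)) (⟪c s, v⟫ + ⟪v, c s⟫) s :=
    HasDerivAt.congr_of_eventuallyEq hin hev.symm
  have := h0.unique (hasDerivAt_const s 1)
  rw [real_inner_comm v (c s)] at this
  rw [real_inner_comm]
  linarith

/-! ### Action as integral of a continuous representative -/

lemma lastCoord_hasDerivAt {c : ℝ → Amb n} {v : Amb n} {s : ℝ}
    (hd : HasDerivAt c v s) :
    HasDerivAt (fun t => lastCoord n (c t)) (lastCoord n v) s := by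
  have h := ((EuclideanSpace.proj (𝕜 := ℝ) (Fin.last n)).hasFDerivAt).comp_hasDerivAt s hd
  exact h

lemma lastCoord_continuousOn {γ : ℝ → Sph n} {S : Set ℝ}
    (h : ContinuousOn (fun t : ℝ => (γ t : Amb n)) S) :
    ContinuousOn (fun t => lastCoord n (γ t : Amb n)) S := by
  have := (EuclideanSpace.proj (𝕜 := ℝ) (Fin.last n)).continuous.comp_continuousOn h
  exact this

lemma action_integral (γ : ℝ → Sph n) (a b : ℝ) (hab : a ≤ b) (W : ℝ → Amb n)
    (hW : ContinuousOn (fun s => ‖W s‖ ^ 2 / 2 - lastCoord n (γ s : Amb n)) (Icc a b))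
    (hd : ∀ s ∈ Ioo a b, HasDerivAt (fun t : ℝ => (γ t : Amb n)) (W s) s) :
    sAction n γ a b + (b - a)
      = ∫ s in a..b, (‖W s‖ ^ 2 / 2 - lastCoord n (γ s : Amb n) + 1) := by
  set F₀ : ℝ → ℝ := fun s => Lsph n (γ s : Amb n) (sVel n γ s) with hF₀
  set G₀ : ℝ → ℝ := fun s => ‖W s‖ ^ 2 / 2 - lastCoord n (γ s : Amb n) with hG₀
  have heq : EqOn F₀ G₀ (Ioo a b) := by
    intro s hs
    have : sVel n γ s = W s := (hd s hs).deriv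
    simp [hF₀, hG₀, Lsph, this]
  have hres : volume.restrict (Ioc a b) = volume.restrict (Ioo a b) :=
    (Measure.restrict_congr_set Ioo_ae_eq_Ioc).symm
  have hae : F₀ =ᵐ[volume.restrict (Ioc a b)] G₀ := by
    rw [hres]
    exact eventually_of_mem (self_mem_ae_restrict measurableSet_Ioo) heq
  have hG₀int : IntegrableOn G₀ (Ioc a b) :=
    (hW.integrableOn_Icc).mono_set Ioc_subset_Icc_self
  have h1 : sAction n γ a b = ∫ s in Ioc a b, G₀ s := by
    rw [sAction, integral_of_le hab]
    exact integral_congr_ae hae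
  have h2 : (∫ s in a..b, (‖W s‖ ^ 2 / 2 - lastCoord n (γ s : Amb n) + 1))
      = (∫ s in Ioc a b, G₀ s) + ∫ s in Ioc a b, (1:ℝ) := by
    rw [integral_of_le hab]
    exact MeasureTheory.integral_add hG₀int
      (integrableOn_const measure_Ioc_lt_top.ne)
  have h3 : ∫ s in Ioc a b, (1:ℝ) = b - a := by
    simp [Real.volume_Ioc, ENNReal.toReal_ofReal (sub_nonneg.2 hab), hab]
  rw [h1, h2, h3]

/-! ### The fundamental domination estimate for `φ_ε` -/

lemma phi_est (γ : ℝ → Sph n) (a b : ℝ) (hab : a ≤ b) (ε : ℝ) (hε : 0 < ε)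
    (W : ℝ → Amb n)
    (hγc : ContinuousOn (fun t : ℝ => (γ t : Amb n)) (Icc a b))
    (hWc : ContinuousOn W (Icc a b))
    (hd : ∀ s ∈ Ioo a b, HasDerivAt (fun t : ℝ => (γ t : Amb n)) (W s) s) :
    2 * Real.sqrt (2 + 2 * lastCoord n (γ a : Amb n) + ε)
      - 2 * Real.sqrt (2 + 2 * lastCoord n (γ b : Amb n) + ε)
      ≤ ∫ s in a..b, (‖W s‖ ^ 2 / 2 - lastCoord n (γ s : Amb n) + 1) := by
  set F : ℝ → ℝ := fun s => ‖W s‖ ^ 2 / 2 - lastCoord n (γ s : Amb n) + 1 with hF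
  set ψ : ℝ → ℝ := fun s => 2 * Real.sqrt (2 + 2 * lastCoord n (γ s : Amb n) + ε) with hψ
  have hFc : ContinuousOn F (Icc a b) := by
    apply ContinuousOn.add ?_ continuousOn_const
    exact ((hWc.norm.pow 2).div_const 2).sub (lastCoord_continuousOn hγc)
  have hψc : ContinuousOn ψ (Icc a b) := by
    apply ContinuousOn.mul continuousOn_const
    exact Real.continuous_sqrt.comp_continuousOn
      ((continuousOn_const.add (continuousOn_const.mul (lastCoord_continuousOn hγc))).add
        continuousOn_const)
  set G : ℝ → ℝ := fun s => (∫ τ in a..s, F τ) + ψ s with hG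
  have hGc : ContinuousOn G (Icc a b) := by
    apply ContinuousOn.add ?_ hψc
    have := continuousOn_primitive_interval
      (f := F) (a := a) (b := b) (μ := volume) (by rw [uIcc_of_le hab]; exact hFc.integrableOn_Icc)
    rwa [uIcc_of_le hab] at this
  have hmain : ∀ s ∈ Ioo a b, HasDerivAt G
      (F s + 2 * (1 / (2 * Real.sqrt (2 + 2 * lastCoord n (γ s : Amb n) + ε))
        * (2 * lastCoord n (W s)))) s := by
    intro s hs
    have hInt1 : IntervalIntegrable F volume a s := by
      apply ContinuousOn.intervalIntegrable
      rw [uIcc_of_le hs.1.le]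
      exact hFc.mono (Icc_subset_Icc le_rfl hs.2.le)
    have hmeas : StronglyMeasurableAtFilter F (nhds s) volume :=
      ⟨Ioo a b, Ioo_mem_nhds hs.1 hs.2,
        (hFc.mono Ioo_subset_Icc_self).aestronglyMeasurable measurableSet_Ioo⟩
    have hca : ContinuousAt F s :=
      (hFc.mono Ioo_subset_Icc_self).continuousAt (Ioo_mem_nhds hs.1 hs.2)
    have hprim : HasDerivAt (fun x => ∫ τ in a..x, F τ) (F s) s :=
      integral_hasDerivAt_right hInt1 hmeas hca
    have hc' : HasDerivAt (fun t => lastCoord n (γ t : Amb n)) (lastCoord n (W s)) s :=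
      lastCoord_hasDerivAt (hd s hs)
    have hinner : HasDerivAt (fun t => 2 + 2 * lastCoord n (γ t : Amb n) + ε)
        (2 * lastCoord n (W s)) s :=
      HasDerivAt.add_const ε (HasDerivAt.const_add (2:ℝ)
        (HasDerivAt.const_mul (2:ℝ) hc'))
    have hpos : 0 < 2 + 2 * lastCoord n (γ s : Amb n) + ε := by
      have := neg_one_le_lastCoord (γ s : Amb n) (sph_norm (γ s)); linarith
    have hsq := (Real.hasDerivAt_sqrt (ne_of_gt hpos)).comp s hinner
    exact hprim.add (hsq.const_mul 2)
  have hmono : MonotoneOn G (Icc a b) := by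
    apply monotoneOn_of_deriv_nonneg (convex_Icc a b) hGc
    · intro s hs
      rw [interior_Icc] at hs
      exact (hmain s hs).differentiableAt.differentiableWithinAt
    · intro s hs
      rw [interior_Icc] at hs
      rw [(hmain s hs).deriv]
      -- nonnegativity via the key inequality
      set c := lastCoord n (γ s : Amb n) with hcdef
      set l := lastCoord n (W s) with hldef
      have hxnorm : ‖(γ s : Amb n)‖ = 1 := sph_norm (γ s)
      have hcm1 : -1 ≤ c := neg_one_le_lastCoord _ hxnorm
      have hc1 : c ≤ 1 := lastCoord_le_one _ hxnorm
      have horth : ⟪(γ s : Amb n), W s⟫ = 0 :=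
        inner_eq_zero_of_hasDerivAt (hd s hs)
          (Filter.Eventually.of_forall fun t => sph_norm (γ t))
      have horth' : ⟪(γ s : Amb n), -(W s)⟫ = 0 := by rw [inner_neg_right, horth, neg_zero]
      have hkey := key_ineq (γ s : Amb n) (-(W s)) hxnorm horth'
      have hlneg : lastCoord n (-(W s)) = -l := by simp [lastCoord, hldef]
      rw [hlneg, norm_neg] at hkey
      -- hkey : 2 * -l ≤ (‖W s‖^2/2 + 1 - c) * √(2+2c)
      have hFs : F s = ‖W s‖ ^ 2 / 2 - c + 1 := rfl
      have hFnn : 0 ≤ F s := by rw [hFs]; nlinarith [sq_nonneg ‖W s‖]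
      set r := Real.sqrt (2 + 2 * c + ε) with hr
      have hrpos : 0 < r := Real.sqrt_pos.2 (by linarith)
      have hrle : Real.sqrt (2 + 2 * c) ≤ r := by
        rw [hr]; exact Real.sqrt_le_sqrt (by linarith)
      have hkey2 : -(2 * l) ≤ F s * r := by
        calc -(2 * l) = 2 * (-l) := by ring
        _ ≤ (‖W s‖ ^ 2 / 2 + 1 - c) * Real.sqrt (2 + 2 * c) := hkey
        _ = F s * Real.sqrt (2 + 2 * c) := by rw [hFs]; ring_nf
        _ ≤ F s * r := mul_le_mul_of_nonneg_left hrle hFnn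
      have hkey3 : -(2 * l) / r ≤ F s := (div_le_iff₀ hrpos).2 hkey2
      rw [neg_div] at hkey3
      have hrw : 2 * (1 / (2 * r) * (2 * l)) = 2 * l / r := by field_simp
      rw [hrw]
      linarith
  have := hmono (left_mem_Icc.2 hab) (right_mem_Icc.2 hab) hab
  simp only [hG, hψ, hF, intervalIntegral.integral_same, zero_add] at this
  linarith [this]


/-! ### The integral identity for `u₊` -/

lemma sqrt_four : Real.sqrt 4 = 2 := by
  rw [show (4:ℝ) = 2^2 by norm_num, Real.sqrt_sq (by norm_num : (0:ℝ) ≤ 2)]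

lemma integrand_eq {s : ℝ} (h1 : -1 < s) (h2 : s < 1) :
    Real.sqrt ((2 - 2*s)/(1 - s^2)) = 2 / Real.sqrt (2 + 2*s) := by
  have hne : (1:ℝ) - s ≠ 0 := by linarith
  have hpos : (0:ℝ) < 1 + s := by linarith
  have key : (2 - 2*s)/(1 - s^2) = 4 / (2 + 2*s) := by
    rw [div_eq_div_iff (ne_of_gt (by nlinarith : (0:ℝ) < 1 - s^2))
      (ne_of_gt (by linarith : (0:ℝ) < 2 + 2*s))]
    ring
  rw [key, Real.sqrt_div (by norm_num : (0:ℝ) ≤ 4), sqrt_four]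

lemma uPlus_integral (c : ℝ) (hc1 : -1 ≤ c) (hc2 : c ≤ 1) :
    (∫ s in c..1, Real.sqrt ((2 - 2*s)/(1 - s^2))) = 4 - 2 * Real.sqrt (2 + 2*c) := by
  set orig : ℝ → ℝ := fun s => Real.sqrt ((2 - 2*s)/(1 - s^2)) with horig
  set g : ℝ → ℝ := fun s => Real.sqrt 2 * ((s + 1) ^ (-(1/2) : ℝ)) with hgdef
  -- orig agrees with g on (-1, 1)
  have hog : ∀ s : ℝ, -1 < s → s < 1 → orig s = g s := by
    intro s h1 h2
    have hpos : (0:ℝ) < s + 1 := by linarith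
    rw [horig]
    simp only
    rw [integrand_eq h1 h2, hgdef]
    simp only
    rw [Real.rpow_neg hpos.le, ← Real.sqrt_eq_rpow]
    have hs2 : Real.sqrt 2 * Real.sqrt 2 = 2 := Real.mul_self_sqrt (by norm_num)
    have hsp : 0 < Real.sqrt (s+1) := Real.sqrt_pos.2 hpos
    have h2s : Real.sqrt (2+2*s) = Real.sqrt 2 * Real.sqrt (s+1) := by
      rw [show (2:ℝ)+2*s = 2*(s+1) by ring, Real.sqrt_mul (by norm_num)]
    rw [h2s, div_eq_iff (by positivity : Real.sqrt 2 * Real.sqrt (s+1) ≠ 0)]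
    rw [show Real.sqrt 2 * (Real.sqrt (s+1))⁻¹ * (Real.sqrt 2 * Real.sqrt (s+1))
        = (Real.sqrt 2 * Real.sqrt 2) * ((Real.sqrt (s+1))⁻¹ * Real.sqrt (s+1)) by ring,
      hs2, inv_mul_cancel₀ hsp.ne']
    norm_num
  -- g is interval integrable
  have hgint : IntervalIntegrable g volume c 1 := by
    have base : IntervalIntegrable (fun x : ℝ => x ^ (-(1/2) : ℝ)) volume (c+1) 2 :=
      intervalIntegral.intervalIntegrable_rpow' (by norm_num)
    have comp := base.comp_sub_right 1
    have : IntervalIntegrable (fun x : ℝ => (x + 1) ^ (-(1/2) : ℝ)) volume c 1 := by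
      have h2 := (base.comp_sub_right (-1))
      simp only [sub_neg_eq_add] at h2
      convert h2 using 2 <;> ring
    exact this.const_mul _
  -- orig is interval integrable
  have haeq : orig =ᵐ[volume.restrict (Ioc c 1)] g := by
    have hne : ∀ᵐ s ∂(volume : Measure ℝ), s ≠ 1 := by
      rw [MeasureTheory.ae_iff]
      have : {a : ℝ | ¬a ≠ 1} = {1} := by ext a; simp
      rw [this]
      exact measure_singleton 1
    have hmem : ∀ᵐ s ∂(volume.restrict (Ioc c 1)), s ∈ Ioc c 1 :=
      ae_restrict_mem measurableSet_Ioc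
    filter_upwards [hmem, ae_restrict_of_ae hne] with s hs hs1
    exact hog s (by linarith [hs.1]) (lt_of_le_of_ne hs.2 hs1)
  have hoint : IntervalIntegrable orig volume c 1 := by
    rw [intervalIntegrable_iff_integrableOn_Ioc_of_le hc2]
    exact ((intervalIntegrable_iff_integrableOn_Ioc_of_le hc2).1 hgint).congr haeq.symm
  -- FTC
  have hderiv : ∀ x ∈ Ioo c 1, HasDerivWithinAt (fun s => 2 * Real.sqrt (2 + 2*s))
      (orig x) (Ioi x) x := by
    intro x hx
    have h1 : -1 < x := lt_of_le_of_lt hc1 hx.1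
    have hpos : (0:ℝ) < 2 + 2*x := by linarith
    have hin : HasDerivAt (fun s : ℝ => 2 + 2*s) 2 x := by
      simpa using (hasDerivAt_id x).const_mul (2:ℝ) |>.const_add (2:ℝ)
    have hsq := (Real.hasDerivAt_sqrt (ne_of_gt hpos)).comp x hin
    have h2 := hsq.const_mul (2:ℝ)
    have hrne : Real.sqrt (2 + 2*x) ≠ 0 := (Real.sqrt_pos.2 hpos).ne'
    have hval : 2 * (1 / (2 * Real.sqrt (2 + 2*x)) * 2) = orig x := by
      rw [horig]; simp only
      rw [integrand_eq h1 hx.2]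
      field_simp
    rw [← hval]
    exact h2.hasDerivWithinAt
  have hcontF : ContinuousOn (fun s => 2 * Real.sqrt (2 + 2*s)) (Icc c 1) := by
    apply continuousOn_const.mul
    exact Real.continuous_sqrt.comp_continuousOn
      (continuousOn_const.add (continuousOn_const.mul continuousOn_id))
  have := intervalIntegral.integral_eq_sub_of_hasDeriv_right_of_le hc2 hcontF hderiv hoint
  rw [horig] at this
  rw [this]
  rw [show (2:ℝ) + 2*1 = 4 by norm_num, sqrt_four]
  ring


/-! ### Curves along great circles through the north pole -/

lemma northPole_lastCoord : lastCoord n ((northPole n : Sph n) : Amb n) = 1 := by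
  simp [northPole, lastCoord, EuclideanSpace.single_apply]

lemma norm_combo (v w : Amb n) (hv : ‖v‖ = 1) (hw : ‖w‖ = 1) (hvw : ⟪v, w⟫ = 0)
    (p q : ℝ) : ‖p • v + q • w‖ ^ 2 = p ^ 2 + q ^ 2 := by
  rw [norm_add_sq_real, real_inner_smul_left, real_inner_smul_right, hvw]
  rw [norm_smul, norm_smul, hv, hw]
  simp [mul_pow, sq_abs]

section Curve

variable (e : Amb n) (θ : ℝ → ℝ)

def curAux (s : ℝ) : Amb n :=
  Real.cos (θ s) • ((northPole n : Sph n) : Amb n) + Real.sin (θ s) • e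

variable {e θ}
variable (he : ‖e‖ = 1) (hel : lastCoord n e = 0)

include hel in
lemma inner_northPole_e : ⟪((northPole n : Sph n) : Amb n), e⟫ = 0 := by
  have : ⟪((northPole n : Sph n) : Amb n), e⟫ = lastCoord n e := by
    simp [northPole, EuclideanSpace.inner_single_left, lastCoord]
  rw [this, hel]

include he hel in
lemma curAux_norm (s : ℝ) : ‖curAux e θ s‖ = 1 := by
  have h2 : ‖curAux e θ s‖ ^ 2 = 1 := by
    rw [curAux, norm_combo _ _ (sph_norm _) he (inner_northPole_e hel)]
    exact Real.cos_sq_add_sin_sq (θ s)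
  nlinarith [norm_nonneg (curAux e θ s), h2]

include he hel in
lemma curAux_mem (s : ℝ) : curAux e θ s ∈ Sph n := by
  simpa [Metric.mem_sphere, dist_eq_norm] using curAux_norm he hel s

include hel in
lemma curAux_lastCoord (s : ℝ) : lastCoord n (curAux e θ s) = Real.cos (θ s) := by
  have hN : lastCoord n ((northPole n : Sph n) : Amb n) = 1 := northPole_lastCoord
  simp only [curAux, lastCoord] at *
  rw [PiLp.add_apply, PiLp.smul_apply, PiLp.smul_apply]
  simp only [smul_eq_mul]
  rw [hN, hel]
  ring

lemma curAux_hasDerivAt {s d : ℝ} (hθ : HasDerivAt θ d s) :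
    HasDerivAt (curAux e θ)
      (d • ((-Real.sin (θ s)) • ((northPole n : Sph n) : Amb n) + Real.cos (θ s) • e)) s := by
  have hcos : HasDerivAt (fun t => Real.cos (θ t)) (-Real.sin (θ s) * d) s :=
    (Real.hasDerivAt_cos (θ s)).comp s hθ
  have hsin : HasDerivAt (fun t => Real.sin (θ t)) (Real.cos (θ s) * d) s :=
    (Real.hasDerivAt_sin (θ s)).comp s hθ
  have h := (hcos.smul_const ((northPole n : Sph n) : Amb n)).add (hsin.smul_const e)
  exact h.congr_deriv (by module)

include he hel in
lemma cur_vel_norm (s d : ℝ) :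
    ‖d • ((-Real.sin (θ s)) • ((northPole n : Sph n) : Amb n) + Real.cos (θ s) • e)‖ ^ 2
      = d ^ 2 := by
  rw [norm_smul, mul_pow, Real.norm_eq_abs, sq_abs]
  have h1 : ‖(-Real.sin (θ s)) • ((northPole n : Sph n) : Amb n) + Real.cos (θ s) • e‖ ^ 2
      = 1 := by
    rw [norm_combo _ _ (sph_norm _) he (inner_northPole_e hel), neg_pow]
    simp [Real.sin_sq_add_cos_sq]
  have h2 : ‖(-Real.sin (θ s)) • ((northPole n : Sph n) : Amb n) + Real.cos (θ s) • e‖ = 1 := by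
    nlinarith [norm_nonneg ((-Real.sin (θ s)) • ((northPole n : Sph n) : Amb n)
      + Real.cos (θ s) • e), h1]
  rw [h2]
  ring

lemma curAux_contDiff (hθ : ContDiff ℝ 1 θ) : ContDiff ℝ 1 (curAux e θ) := by
  apply ContDiff.add
  · exact ((Real.contDiff_cos.of_le le_top).comp hθ).smul contDiff_const
  · exact ((Real.contDiff_sin.of_le le_top).comp hθ).smul contDiff_const

variable (e θ) in
def curS (he : ‖e‖ = 1) (hel : lastCoord n e = 0) : ℝ → Sph n := fun s =>
  ⟨curAux e θ s, curAux_mem he hel s⟩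

end Curve


/-! ### Action of great-circle curves, decomposition, continuity of `u` at `N` -/

lemma cur_action (e : Amb n) (θ θ' : ℝ → ℝ) (he : ‖e‖ = 1) (hel : lastCoord n e = 0)
    (hθd : ∀ s, HasDerivAt θ (θ' s) s) (hθ'c : Continuous θ')
    (a b : ℝ) (hab : a ≤ b) :
    sAction n (curS e θ he hel) a b + (b - a)
      = ∫ s in a..b, (θ' s ^ 2 / 2 - Real.cos (θ s) + 1) := by
  set W : ℝ → Amb n := fun s =>
    θ' s • ((-Real.sin (θ s)) • ((northPole n : Sph n) : Amb n) + Real.cos (θ s) • e) with hW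
  have hθc : Continuous θ :=
    Differentiable.continuous (fun s => (hθd s).differentiableAt)
  have hfun : (fun s => ‖W s‖ ^ 2 / 2 - lastCoord n ((curS e θ he hel s : Sph n) : Amb n))
      = (fun s => θ' s ^ 2 / 2 - Real.cos (θ s)) := by
    funext s
    have h1 : ‖W s‖ ^ 2 = θ' s ^ 2 := cur_vel_norm he hel s (θ' s)
    have h2 : lastCoord n ((curS e θ he hel s : Sph n) : Amb n) = Real.cos (θ s) :=
      curAux_lastCoord hel s
    rw [h1, h2]
  have hfun1 : (fun s => ‖W s‖ ^ 2 / 2 - lastCoord n ((curS e θ he hel s : Sph n) : Amb n) + 1)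
      = (fun s => θ' s ^ 2 / 2 - Real.cos (θ s) + 1) := by
    funext s; rw [congrFun hfun s]
  have hcont : ContinuousOn
      (fun s => ‖W s‖ ^ 2 / 2 - lastCoord n ((curS e θ he hel s : Sph n) : Amb n)) (Icc a b) := by
    rw [hfun]
    exact (((hθ'c.pow 2).div_const 2).sub (Real.continuous_cos.comp hθc)).continuousOn
  have hd : ∀ s ∈ Ioo a b,
      HasDerivAt (fun t : ℝ => ((curS e θ he hel t : Sph n) : Amb n)) (W s) s := by
    intro s _
    exact curAux_hasDerivAt (hθd s)
  rw [action_integral (curS e θ he hel) a b hab W hcont hd, hfun1]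

lemma exists_e (hn : 1 ≤ n) (p : Sph n) :
    ∃ e : Amb n, ‖e‖ = 1 ∧ lastCoord n e = 0 ∧
      (p : Amb n)
        = Real.cos (Real.arccos (lastCoord n (p : Amb n))) • ((northPole n : Sph n) : Amb n)
          + Real.sin (Real.arccos (lastCoord n (p : Amb n))) • e := by
  set c := lastCoord n (p : Amb n) with hc
  have hpn : ‖(p : Amb n)‖ = 1 := sph_norm p
  have hc1 : c ≤ 1 := lastCoord_le_one _ hpn
  have hcm : -1 ≤ c := neg_one_le_lastCoord _ hpn
  have hcos : Real.cos (Real.arccos c) = c := Real.cos_arccos hcm hc1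
  have hsin : Real.sin (Real.arccos c) = Real.sqrt (1 - c^2) := Real.sin_arccos c
  set w : Amb n := (p : Amb n) - c • ((northPole n : Sph n) : Amb n) with hw
  have hpN : ⟪(p : Amb n), ((northPole n : Sph n) : Amb n)⟫ = c := by
    simp [northPole, EuclideanSpace.inner_single_right, lastCoord, hc]
  have hwn : ‖w‖^2 = 1 - c^2 := by
    rw [hw, norm_sub_sq_real, real_inner_smul_right, hpN, norm_smul, hpn]
    rw [sph_norm (northPole n), Real.norm_eq_abs]
    rw [mul_pow, sq_abs]
    ring
  have hwlast : lastCoord n w = 0 := by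
    have hN : lastCoord n ((northPole n : Sph n) : Amb n) = 1 := northPole_lastCoord
    simp only [lastCoord] at hN ⊢
    rw [hw]
    rw [PiLp.sub_apply, PiLp.smul_apply, smul_eq_mul, hN, mul_one]
    simp [hc, lastCoord]
  by_cases h0 : w = 0
  · have h1c : Real.sqrt (1 - c^2) = 0 := by
      rw [← hwn, h0]; simp
    have hlast0 : (Fin.last n) ≠ (⟨0, by omega⟩ : Fin (n+1)) := by
      intro h
      have := congrArg Fin.val h
      simp [Fin.last] at this
      omega
    refine ⟨EuclideanSpace.single (⟨0, by omega⟩ : Fin (n+1)) 1, ?_, ?_, ?_⟩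
    · simp [EuclideanSpace.norm_single]
    · simp [lastCoord, EuclideanSpace.single_apply, hlast0]
      omega
    · rw [hcos, hsin, h1c, zero_smul, add_zero]
      have h1 : (p : Amb n) - c • ((northPole n : Sph n) : Amb n) = 0 := by rw [← hw, h0]
      have := sub_eq_zero.1 h1
      exact this
  · have hwpos : 0 < ‖w‖ := norm_pos_iff.2 h0
    refine ⟨‖w‖⁻¹ • w, norm_smul_inv_norm h0, ?_, ?_⟩
    · simp only [lastCoord, PiLp.smul_apply, smul_eq_mul]
      have h := hwlast
      simp only [lastCoord] at h
      rw [h, mul_zero]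
    · rw [hcos, hsin]
      have hsw : Real.sqrt (1 - c^2) = ‖w‖ := by rw [← hwn, Real.sqrt_sq (norm_nonneg _)]
      rw [hsw, smul_smul, mul_inv_cancel₀ hwpos.ne', one_smul, hw]
      abel

lemma u_near_N (hn : 1 ≤ n) {u : Sph n → ℝ} (hdom : sDominated n 1 u) (p : Sph n) :
    |u p - u (northPole n)| ≤ 3 * Real.arccos (lastCoord n (p : Amb n)) := by
  obtain ⟨e, he, hel, hdecomp⟩ := exists_e hn p
  set c := lastCoord n (p : Amb n) with hc
  set T := Real.arccos c with hT
  have hT0 : 0 ≤ T := Real.arccos_nonneg c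
  have key : ∀ θ θ' : ℝ → ℝ, (∀ s, HasDerivAt θ (θ' s) s) → Continuous θ' →
      (∀ s, θ' s ^ 2 ≤ 1) →
      u (curS e θ he hel T) - u (curS e θ he hel 0) ≤ 3 * T := by
    intro θ θ' hθd hθ'c hble
    have hθc : Continuous θ :=
      Differentiable.continuous (fun s => (hθd s).differentiableAt)
    have hθC : ContDiff ℝ 1 θ := by
      rw [contDiff_one_iff_deriv]
      refine ⟨fun s => (hθd s).differentiableAt, ?_⟩
      have : deriv θ = θ' := funext fun s => (hθd s).deriv
      rw [this]; exact hθ'c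
    have hpc : sPiecewiseC1On n (curS e θ he hel) 0 T :=
      single_piece _ 0 T hT0 (curAux_contDiff hθC).contDiffOn
    have hdom' := hdom (curS e θ he hel) 0 T hT0 hpc
    have hact := cur_action e θ θ' he hel hθd hθ'c 0 T hT0
    have hbound : (∫ s in (0:ℝ)..T, (θ' s ^ 2 / 2 - Real.cos (θ s) + 1)) ≤ 3 * T := by
      have hint1 : IntervalIntegrable (fun s => θ' s ^ 2 / 2 - Real.cos (θ s) + 1)
          volume 0 T :=
        ((((hθ'c.pow 2).div_const 2).sub (Real.continuous_cos.comp hθc)).add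
          continuous_const).intervalIntegrable 0 T
      have hmono := intervalIntegral.integral_mono_on hT0 hint1
        (_root_.intervalIntegrable_const (c := (3:ℝ)))
        (fun x _ => by nlinarith [Real.neg_one_le_cos (θ x), hble x])
      rw [intervalIntegral.integral_const, smul_eq_mul] at hmono
      linarith
    linarith [hdom', hact, hbound]
  have hend1 : curS e (fun s => s) he hel T = p := by
    apply Subtype.ext
    show curAux e (fun s => s) T = (p : Amb n)
    rw [curAux]
    exact hdecomp.symm
  have hend0 : curS e (fun s => s) he hel 0 = northPole n := by
    apply Subtype.ext
    show curAux e (fun s => s) 0 = ((northPole n : Sph n) : Amb n)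
    simp [curAux]
  have hend1' : curS e (fun s => T - s) he hel 0 = p := by
    apply Subtype.ext
    show curAux e (fun s => T - s) 0 = (p : Amb n)
    rw [curAux]
    simp only [sub_zero]
    exact hdecomp.symm
  have hend0' : curS e (fun s => T - s) he hel T = northPole n := by
    apply Subtype.ext
    show curAux e (fun s => T - s) T = ((northPole n : Sph n) : Amb n)
    simp [curAux]
  have k1 := key (fun s => s) (fun _ => 1) (fun s => hasDerivAt_id s) continuous_const
    (fun s => by norm_num)
  have k2 := key (fun s => T - s) (fun _ => -1)
    (fun s => (hasDerivAt_id s).const_sub T) continuous_const (fun s => by norm_num)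
  rw [hend1, hend0] at k1
  rw [hend1', hend0'] at k2
  rw [abs_le]
  constructor <;> linarith


/-! ### Direction B : `u x ≤ u N + u₊ x` -/

lemma sin_two_arctan (t : ℝ) : Real.sin (2 * Real.arctan t) = 2 * t / (1 + t^2) := by
  rw [Real.sin_two_mul, Real.sin_arctan, Real.cos_arctan]
  have h : Real.sqrt (1+t^2) * Real.sqrt (1+t^2) = 1 + t^2 := Real.mul_self_sqrt (by positivity)
  have hne : Real.sqrt (1+t^2) ≠ 0 := by positivity
  field_simp
  rw [Real.sq_sqrt (by positivity)]

lemma one_sub_cos_eq (x : ℝ) : Real.cos (2*x) = 1 - 2 * Real.sin x ^ 2 := by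
  rw [Real.cos_two_mul]
  nlinarith [Real.sin_sq_add_cos_sq x]

lemma directionB (hn : 1 ≤ n) {u : Sph n → ℝ} (hdom : sDominated n 1 u) (x : Sph n) :
    u x ≤ u (northPole n) + (4 - 2 * Real.sqrt (2 + 2 * lastCoord n (x : Amb n))) := by
  obtain ⟨e, he, hel, hdecomp⟩ := exists_e hn x
  set c := lastCoord n (x : Amb n) with hc
  have hpn : ‖(x : Amb n)‖ = 1 := sph_norm x
  have hc1 : c ≤ 1 := lastCoord_le_one _ hpn
  have hcm : -1 ≤ c := neg_one_le_lastCoord _ hpn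
  set Tx := Real.arccos c with hTx
  have hT0 : 0 ≤ Tx := Real.arccos_nonneg c
  have hTpi : Tx ≤ Real.pi := Real.arccos_le_pi c
  have hcosTx : Real.cos Tx = c := Real.cos_arccos hcm hc1
  by_cases hN : Tx = 0
  · -- x = N
    have hc' : c = 1 := by rw [← hcosTx, hN, Real.cos_zero]
    have hxN : x = northPole n := by
      apply Subtype.ext
      rw [hdecomp, hN]
      simp
    rw [hxN, hc', show (2:ℝ) + 2*1 = 4 by norm_num, sqrt_four]
    norm_num
  · have hTpos : 0 < Tx := lt_of_le_of_ne hT0 (Ne.symm hN)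
    set θ : ℝ → ℝ := fun s => 4 * Real.arctan (Real.exp s) with hθdef
    set θ' : ℝ → ℝ := fun s => 4 * (1/(1 + Real.exp s ^ 2) * Real.exp s) with hθ'def
    have hθd : ∀ s, HasDerivAt θ (θ' s) s := fun s =>
      ((Real.hasDerivAt_arctan (Real.exp s)).comp s (Real.hasDerivAt_exp s)).const_mul 4
    have hθ'c : Continuous θ' := by
      apply continuous_const.mul
      exact (continuous_const.div (continuous_const.add (Real.continuous_exp.pow 2))
        (fun s => (by positivity : (1:ℝ) + Real.exp s ^ 2 ≠ 0))).mul Real.continuous_exp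
    have hθc : Continuous θ :=
      Differentiable.continuous (fun s => (hθd s).differentiableAt)
    have hθC : ContDiff ℝ 1 θ := by
      rw [contDiff_one_iff_deriv]
      refine ⟨fun s => (hθd s).differentiableAt, ?_⟩
      have : deriv θ = θ' := funext fun s => (hθd s).deriv
      rw [this]; exact hθ'c
    -- trigonometric identities along the curve
    have hhalf : ∀ s, θ s / 2 = 2 * Real.arctan (Real.exp s) := fun s => by
      rw [hθdef]; ring
    have hsin : ∀ s, Real.sin (θ s / 2) = 2 * Real.exp s / (1 + Real.exp s ^ 2) := fun s => by
      rw [hhalf, sin_two_arctan]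
    have hθ'sin : ∀ s, θ' s = 2 * Real.sin (θ s / 2) := fun s => by
      rw [hsin, hθ'def]
      have : (1:ℝ) + Real.exp s ^ 2 ≠ 0 := by positivity
      field_simp
      ring
    have hcosθ : ∀ s, Real.cos (θ s) = 1 - 2 * Real.sin (θ s / 2) ^ 2 := fun s => by
      rw [show θ s = 2 * (θ s / 2) by ring, one_sub_cos_eq]
      ring_nf
    have heq : ∀ s, θ' s ^ 2 / 2 - Real.cos (θ s) + 1 = 4 * Real.sin (θ s / 2) ^ 2 := by
      intro s
      rw [hθ'sin, hcosθ]
      ring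
    -- the endpoint parameter
    set sx := Real.log (Real.tan (Tx / 4)) with hsx
    have htanpos : 0 < Real.tan (Tx / 4) := by
      apply Real.tan_pos_of_pos_of_lt_pi_div_two
      · linarith
      · nlinarith [Real.pi_pos]
    have hθsx : θ sx = Tx := by
      rw [hθdef]
      simp only
      rw [hsx, Real.exp_log htanpos, Real.arctan_tan]
      · ring
      · nlinarith [Real.pi_pos]
      · nlinarith [Real.pi_pos]
    have hendx : curS e θ he hel sx = x := by
      apply Subtype.ext
      show curAux e θ sx = (x : Amb n)
      rw [curAux, hθsx]
      exact hdecomp.symm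
    -- FTC along the curve
    have hFTC : ∀ a : ℝ, a ≤ sx → (∫ s in a..sx, (θ' s ^ 2 / 2 - Real.cos (θ s) + 1))
        = (-4) * Real.cos (θ sx / 2) - (-4) * Real.cos (θ a / 2) := by
      intro a ha
      have hd : ∀ s : ℝ, HasDerivAt (fun t => (-4) * Real.cos (θ t / 2))
          (4 * Real.sin (θ s / 2) ^ 2) s := by
        intro s
        have h1 : HasDerivAt (fun t => θ t / 2) (θ' s / 2) s := (hθd s).div_const 2
        have h2 := (Real.hasDerivAt_cos (θ s / 2)).comp s h1
        have h3 := h2.const_mul (-4 : ℝ)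
        refine h3.congr_deriv ?_
        rw [hθ'sin s]
        ring
      simp only [heq]
      exact intervalIntegral.integral_eq_sub_of_hasDerivAt (fun s _ => hd s)
        ((continuous_const.mul ((Real.continuous_sin.comp
          (hθc.div_const 2)).pow 2)).intervalIntegrable a sx)
    -- the domination estimate for every a ≤ sx
    have hEst : ∀ a : ℝ, a ≤ sx →
        u x ≤ u (curS e θ he hel a)
          + ((-4) * Real.cos (θ sx / 2) - (-4) * Real.cos (θ a / 2)) := by
      intro a ha
      have hpc : sPiecewiseC1On n (curS e θ he hel) a sx :=
        single_piece _ a sx ha (curAux_contDiff hθC).contDiffOn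
      have hdom' := hdom (curS e θ he hel) a sx ha hpc
      have hact := cur_action e θ θ' he hel hθd hθ'c a sx ha
      rw [hFTC a ha] at hact
      rw [hendx] at hdom'
      linarith
    -- limits as a → -∞
    have hθlim : Tendsto θ atBot (nhds 0) := by
      have h1 : Tendsto (fun a => Real.arctan (Real.exp a)) atBot (nhds (Real.arctan 0)) :=
        (Real.continuous_arctan.tendsto 0).comp Real.tendsto_exp_atBot
      rw [Real.arctan_zero] at h1
      simpa [hθdef] using h1.const_mul (4:ℝ)
    have hψlim : Tendsto (fun a => (-4) * Real.cos (θ a / 2)) atBot (nhds (-4)) := by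
      have h1 : Tendsto (fun a => Real.cos (θ a / 2)) atBot (nhds (Real.cos (0/2))) :=
        (Real.continuous_cos.tendsto _).comp (hθlim.div_const 2)
      simp only [zero_div, Real.cos_zero] at h1
      simpa using h1.const_mul (-4:ℝ)
    have hulim : Tendsto (fun a => u (curS e θ he hel a)) atBot (nhds (u (northPole n))) := by
      rw [tendsto_iff_dist_tendsto_zero]
      have hb : ∀ a : ℝ, dist (u (curS e θ he hel a)) (u (northPole n))
          ≤ 3 * Real.arccos (Real.cos (θ a)) := by
        intro a
        rw [Real.dist_eq]
        have := u_near_N hn hdom (curS e θ he hel a)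
        rwa [show lastCoord n ((curS e θ he hel a : Sph n) : Amb n) = Real.cos (θ a) from
          curAux_lastCoord hel a] at this
      have hblim : Tendsto (fun a => 3 * Real.arccos (Real.cos (θ a))) atBot (nhds 0) := by
        have h1 : Tendsto (fun a => Real.arccos (Real.cos (θ a))) atBot
            (nhds (Real.arccos (Real.cos 0))) :=
          (Real.continuous_arccos.tendsto _).comp ((Real.continuous_cos.tendsto _).comp hθlim)
        rw [Real.cos_zero, Real.arccos_one] at h1
        simpa using h1.const_mul (3:ℝ)
      exact squeeze_zero (fun a => dist_nonneg) hb hblim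
    -- pass to the limit
    have hfinal : u x ≤ u (northPole n) + ((-4) * Real.cos (θ sx / 2) + 4) := by
      have hlim : Tendsto (fun a => u (curS e θ he hel a)
          + ((-4) * Real.cos (θ sx / 2) - (-4) * Real.cos (θ a / 2))) atBot
          (nhds (u (northPole n) + ((-4) * Real.cos (θ sx / 2) + 4))) := by
        have := hulim.add ((tendsto_const_nhds (x := (-4) * Real.cos (θ sx / 2))).sub hψlim)
        convert this using 2
        ring
      exact ge_of_tendsto hlim (eventually_atBot.2 ⟨sx, hEst⟩)
    -- identify the limit with the closed form
    have hid : Real.sqrt (2 + 2 * c) = 2 * Real.cos (Tx / 2) := by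
      have h1 : 2 + 2*c = 4 * Real.cos (Tx/2) ^ 2 := by
        have := Real.cos_two_mul (Tx/2)
        rw [show 2 * (Tx/2) = Tx by ring] at this
        rw [← hcosTx]
        nlinarith [this]
      have hcnn : 0 ≤ Real.cos (Tx/2) := by
        apply Real.cos_nonneg_of_mem_Icc
        constructor
        · nlinarith [Real.pi_pos]
        · nlinarith
      rw [h1, show (4:ℝ) * Real.cos (Tx/2)^2 = (2*Real.cos (Tx/2))^2 by ring,
        Real.sqrt_sq (by linarith)]
    rw [hθsx] at hfinal
    rw [hid]
    linarith

/-! ### Direction A : `u N + u₊ x ≤ u x` -/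

lemma directionA (hn : 1 ≤ n) {u : Sph n → ℝ} (hu : sBackwardWeakKAM n 1 u) (x : Sph n) :
    u (northPole n) + (4 - 2 * Real.sqrt (2 + 2 * lastCoord n (x : Amb n))) ≤ u x := by
  obtain ⟨hdom, hcal⟩ := hu
  obtain ⟨γ, hγ0, hγC, hcaleq⟩ := hcal x
  set W : ℝ → Amb n := derivWithin (fun t : ℝ => (γ t : Amb n)) (Iic 0) with hWdef
  have hWc : ContinuousOn W (Iic 0) :=
    hγC.continuousOn_derivWithin (uniqueDiffOn_Iic 0) le_rfl
  have hγc : ContinuousOn (fun t : ℝ => (γ t : Amb n)) (Iic 0) := hγC.continuousOn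
  have hFc : ContinuousOn
      (fun s => ‖W s‖ ^ 2 / 2 - lastCoord n (γ s : Amb n) + 1) (Iic 0) :=
    (((hWc.norm.pow 2).div_const 2).sub (lastCoord_continuousOn hγc)).add continuousOn_const
  have hFnn : ∀ s : ℝ, 0 ≤ ‖W s‖ ^ 2 / 2 - lastCoord n (γ s : Amb n) + 1 := by
    intro s
    have h1 := lastCoord_le_one (γ s : Amb n) (sph_norm _)
    nlinarith [sq_nonneg ‖W s‖]
  have hd : ∀ s ∈ Iio (0:ℝ), HasDerivAt (fun t : ℝ => (γ t : Amb n)) (W s) s := by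
    intro s hs
    have h2 : Iic (0:ℝ) ∈ nhds s := Iic_mem_nhds hs
    have h1 : DifferentiableAt ℝ (fun t : ℝ => (γ t : Amb n)) s :=
      ((hγC.differentiableOn one_ne_zero) s (mem_Iic.2 (le_of_lt (mem_Iio.1 hs)))).differentiableAt h2
    rw [hWdef, derivWithin_of_mem_nhds h2]
    exact h1.hasDerivAt
  have hIntOn : ∀ a b : ℝ, a ≤ b → b ≤ 0 →
      IntervalIntegrable (fun s => ‖W s‖ ^ 2 / 2 - lastCoord n (γ s : Amb n) + 1)
        volume a b := by
    intro a b hab hb0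
    apply ContinuousOn.intervalIntegrable
    rw [uIcc_of_le hab]
    exact hFc.mono (fun σ hσ => le_trans hσ.2 hb0)
  set g : ℝ → ℝ := fun t =>
    ∫ s in (-t)..(0:ℝ), (‖W s‖ ^ 2 / 2 - lastCoord n (γ s : Amb n) + 1) with hg
  -- calibration in integral form
  have hcal' : ∀ t : ℝ, 0 ≤ t → u x - u (γ (-t)) = g t := by
    intro t ht
    have h1 := hcaleq t ht
    have h2 := action_integral γ (-t) 0 (by linarith) W
      ((((hWc.norm.pow 2).div_const 2).sub (lastCoord_continuousOn hγc)).mono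
        (fun σ hσ => hσ.2))
      (fun s hs => hd s hs.2)
    simp only [hg]
    rw [h1]
    rw [← h2]
    ring
  -- monotonicity of g
  have hgmono : ∀ t t' : ℝ, 0 ≤ t → t ≤ t' → g t ≤ g t' := by
    intro t t' ht htt'
    have hadd := intervalIntegral.integral_add_adjacent_intervals
      (hIntOn (-t') (-t) (by linarith) (by linarith))
      (hIntOn (-t) 0 (by linarith) le_rfl)
    have hpos : 0 ≤ ∫ s in (-t')..(-t),
        (‖W s‖ ^ 2 / 2 - lastCoord n (γ s : Amb n) + 1) :=
      intervalIntegral.integral_nonneg (by linarith) (fun s _ => hFnn s)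
    simp only [hg]
    linarith [hadd, hpos]
  -- boundedness of g
  have hgbdd : ∀ t : ℝ, 0 ≤ t → g t ≤ u x - u (northPole n) + 3 * Real.pi := by
    intro t ht
    have h1 := hcal' t ht
    have h2 := u_near_N hn hdom (γ (-t))
    rw [abs_le] at h2
    have h3 := Real.arccos_le_pi (lastCoord n ((γ (-t) : Sph n) : Amb n))
    have h4 := Real.arccos_nonneg (lastCoord n ((γ (-t) : Sph n) : Amb n))
    linarith [h2.1]
  -- the sequence g(k) converges; g(k+1) - g(k) → 0
  have hmonoN : Monotone (fun k : ℕ => g (k : ℝ)) := by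
    intro k l hkl
    exact hgmono _ _ (Nat.cast_nonneg k) (by exact_mod_cast hkl)
  have hbddN : BddAbove (Set.range (fun k : ℕ => g (k : ℝ))) := by
    refine ⟨u x - u (northPole n) + 3 * Real.pi, ?_⟩
    rintro y ⟨k, rfl⟩
    exact hgbdd _ (Nat.cast_nonneg k)
  have hGlim := tendsto_atTop_ciSup hmonoN hbddN
  have hdlim : Tendsto (fun k : ℕ => g ((k:ℝ)+1) - g (k:ℝ)) atTop (nhds 0) := by
    have h1 : Tendsto (fun k : ℕ => g ((k:ℝ)+1)) atTop (nhds (⨆ k : ℕ, g (k:ℝ))) := by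
      have h2 := hGlim.comp (tendsto_add_atTop_nat 1)
      have h3 : ((fun k : ℕ => g (k:ℝ)) ∘ fun a => a + 1) = fun k : ℕ => g ((k:ℝ)+1) := by
        funext k
        simp only [Function.comp]
        congr 1
        push_cast
        ring
      rwa [h3] at h2
    have := h1.sub hGlim
    simpa using this
  -- good points where the integrand is small
  have hgood : ∀ k : ℕ, ∃ σ ∈ Icc (-(k:ℝ)-1) (-(k:ℝ)),
      (‖W σ‖ ^ 2 / 2 - lastCoord n (γ σ : Amb n) + 1) ≤ g ((k:ℝ)+1) - g (k:ℝ) := by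
    intro k
    have hle : (-(k:ℝ)-1) ≤ (-(k:ℝ)) := by linarith
    have hk0 : (-(k:ℝ)) ≤ 0 := neg_nonpos.2 (Nat.cast_nonneg k)
    have hsub : Icc (-(k:ℝ)-1) (-(k:ℝ)) ⊆ Iic 0 := fun σ hσ => le_trans hσ.2 hk0
    have hdiff : g ((k:ℝ)+1) - g (k:ℝ) = ∫ σ in (-(k:ℝ)-1)..(-(k:ℝ)),
        (‖W σ‖ ^ 2 / 2 - lastCoord n (γ σ : Amb n) + 1) := by
      have hadd := intervalIntegral.integral_add_adjacent_intervals
        (hIntOn (-(k:ℝ)-1) (-(k:ℝ)) hle hk0)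
        (hIntOn (-(k:ℝ)) 0 hk0 le_rfl)
      have hcast : -((k:ℝ)+1) = -(k:ℝ)-1 := by ring
      simp only [hg, hcast]
      linarith [hadd]
    by_contra hcon
    push_neg at hcon
    obtain ⟨σ₀, hσ₀mem, hσ₀min⟩ := isCompact_Icc.exists_isMinOn
      (Set.nonempty_Icc.2 hle) (hFc.mono hsub)
    have hlow := intervalIntegral.integral_mono_on hle
      (_root_.intervalIntegrable_const
        (c := ‖W σ₀‖ ^ 2 / 2 - lastCoord n (γ σ₀ : Amb n) + 1))
      (hIntOn _ _ hle hk0)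
      (fun σ hσ => (isMinOn_iff.1 hσ₀min) σ hσ)
    rw [intervalIntegral.integral_const, smul_eq_mul] at hlow
    have hc := hcon σ₀ hσ₀mem
    rw [hdiff] at hc
    have h1 : ((-(k:ℝ)) - ((-(k:ℝ))-1)) = 1 := by ring
    rw [h1, one_mul] at hlow
    linarith
  choose σs hσmem hσle using hgood
  have hσ0 : ∀ k : ℕ, σs k ≤ 0 := fun k =>
    le_trans (hσmem k).2 (neg_nonpos.2 (Nat.cast_nonneg k))
  -- the last coordinate along σs tends to 1
  have hlastle : ∀ k : ℕ, 1 - (g ((k:ℝ)+1) - g (k:ℝ)) ≤ lastCoord n (γ (σs k) : Amb n) := by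
    intro k
    have h1 := hσle k
    nlinarith [sq_nonneg ‖W (σs k)‖]
  have hlastub : ∀ k : ℕ, lastCoord n (γ (σs k) : Amb n) ≤ 1 := fun k =>
    lastCoord_le_one _ (sph_norm _)
  have hlastlim : Tendsto (fun k : ℕ => lastCoord n (γ (σs k) : Amb n)) atTop (nhds 1) := by
    have hlow : Tendsto (fun k : ℕ => 1 - (g ((k:ℝ)+1) - g (k:ℝ))) atTop (nhds 1) := by
      have := hdlim.const_sub 1
      simpa using this
    exact tendsto_of_tendsto_of_tendsto_of_le_of_le hlow tendsto_const_nhds hlastle hlastub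
  -- φ_ε estimate for each k
  have hphi : ∀ k : ℕ, 2 * Real.sqrt (2 + 2 * lastCoord n (γ (σs k) : Amb n))
      - 2 * Real.sqrt (2 + 2 * lastCoord n (x : Amb n)) ≤ u x - u (γ (σs k)) := by
    intro k
    have hεest : ∀ ε : ℝ, 0 < ε →
        2 * Real.sqrt (2 + 2 * lastCoord n (γ (σs k) : Amb n) + ε)
          - 2 * Real.sqrt (2 + 2 * lastCoord n (x : Amb n) + ε)
          ≤ u x - u (γ (σs k)) := by
      intro ε hεpos
      have hIccsub : Icc (σs k) (0:ℝ) ⊆ Iic 0 := fun σ hσ => hσ.2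
      have hest := phi_est γ (σs k) 0 (hσ0 k) ε hεpos W
        (hγc.mono hIccsub) (hWc.mono hIccsub)
        (fun σ hσ => hd σ hσ.2)
      rw [hγ0] at hest
      have h1 := hcal' (-(σs k)) (by linarith [hσ0 k])
      rw [neg_neg] at h1
      simp only [hg, neg_neg] at h1
      linarith [hest, h1]
    have hcont : Tendsto (fun ε : ℝ =>
        2 * Real.sqrt (2 + 2 * lastCoord n (γ (σs k) : Amb n) + ε)
          - 2 * Real.sqrt (2 + 2 * lastCoord n (x : Amb n) + ε))
        (nhdsWithin 0 (Ioi 0))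
        (nhds (2 * Real.sqrt (2 + 2 * lastCoord n (γ (σs k) : Amb n))
          - 2 * Real.sqrt (2 + 2 * lastCoord n (x : Amb n)))) := by
      apply tendsto_nhdsWithin_of_tendsto_nhds
      have hc1 : Continuous (fun ε : ℝ =>
          2 * Real.sqrt (2 + 2 * lastCoord n (γ (σs k) : Amb n) + ε)
            - 2 * Real.sqrt (2 + 2 * lastCoord n (x : Amb n) + ε)) := by
        apply Continuous.sub
        · exact continuous_const.mul
            (Real.continuous_sqrt.comp (continuous_const.add continuous_id))
        · exact continuous_const.mul
            (Real.continuous_sqrt.comp (continuous_const.add continuous_id))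
      have := hc1.tendsto 0
      simpa using this
    exact le_of_tendsto hcont
      (eventually_nhdsWithin_of_forall (fun ε hε => hεest ε hε))
  -- limits k → ∞
  have hA : Tendsto (fun k : ℕ => 2 * Real.sqrt (2 + 2 * lastCoord n (γ (σs k) : Amb n)))
      atTop (nhds 4) := by
    have h1 : Tendsto (fun k : ℕ => Real.sqrt (2 + 2 * lastCoord n (γ (σs k) : Amb n)))
        atTop (nhds (Real.sqrt (2 + 2 * 1))) :=
      (Real.continuous_sqrt.tendsto _).comp
        ((continuous_const.add (continuous_const.mul continuous_id)).tendsto 1 |>.comp hlastlim)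
    rw [show (2:ℝ) + 2*1 = 4 by norm_num, sqrt_four] at h1
    have h4 := h1.const_mul (2:ℝ)
    rw [show (2:ℝ)*2 = 4 by norm_num] at h4
    simpa using h4
  have hB : Tendsto (fun k : ℕ => u (γ (σs k))) atTop (nhds (u (northPole n))) := by
    rw [tendsto_iff_dist_tendsto_zero]
    have hb : ∀ k : ℕ, dist (u (γ (σs k))) (u (northPole n))
        ≤ 3 * Real.arccos (lastCoord n (γ (σs k) : Amb n)) := by
      intro k
      rw [Real.dist_eq]
      exact u_near_N hn hdom (γ (σs k))
    have hblim : Tendsto (fun k : ℕ => 3 * Real.arccos (lastCoord n (γ (σs k) : Amb n)))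
        atTop (nhds 0) := by
      have h1 := (Real.continuous_arccos.tendsto _).comp hlastlim
      rw [Real.arccos_one] at h1
      have := h1.const_mul (3:ℝ)
      simpa using this
    exact squeeze_zero (fun k => dist_nonneg) hb hblim
  -- conclude
  have hfin := le_of_tendsto_of_tendsto'
    (hA.sub tendsto_const_nhds)
    (tendsto_const_nhds.sub hB)
    hphi
  linarith [hfin]


end Aux

/-- Uniqueness of the backward weak KAM solution of the spherical
pendulum: every backward weak KAM solution `u` for the value `c = 1` satisfies
`u x = u N + ∫_{x_{n+1}}^1 √((2−2s)/(1−s²)) ds`, where `N = (0,…,0,1)` is the north pole;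
in particular backward weak KAM solutions are unique up to an additive constant. -/
theorem backward_weakKAM_unique (hn : 1 ≤ n)
    (u : Sph n → ℝ) (hu : sBackwardWeakKAM n 1 u) :
    ∀ x : Sph n,
      u x = u (northPole n) +
        ∫ s in (lastCoord n (x : Amb n))..1, Real.sqrt ((2 - 2 * s) / (1 - s ^ 2)) := by
  intro x
  have hpn : ‖(x : Amb n)‖ = 1 := sph_norm x
  have hc1 : lastCoord n (x : Amb n) ≤ 1 := lastCoord_le_one _ hpn
  have hcm : -1 ≤ lastCoord n (x : Amb n) := neg_one_le_lastCoord _ hpn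
  rw [show (∫ s in (lastCoord n (x : Amb n))..1, Real.sqrt ((2 - 2 * s) / (1 - s ^ 2)))
      = 4 - 2 * Real.sqrt (2 + 2 * lastCoord n (x : Amb n)) by
    have := uPlus_integral (lastCoord n (x : Amb n)) hcm hc1
    convert this using 2]
  have h1 := directionA hn hu x
  have h2 := directionB hn hu.1 x
  linarith

end SphericalPendulum
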